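/- Let (T_t)_{t≥0} be a strongly continuous contraction semigroup on a Banach space X with generator (L, Dom(L)), let (F(τ))_{τ≥0} be contractions on X, let φ ∈ Dom(L), and let m ∈ ℕ, m ≥ 1. Define Ψ(s) := ‖[F(s/m)]^m φ − T_s φ‖_X for s > 0. Then for every s > 0: Ψ(s)/s ≤ ‖(T_s φ − φ)/s − Lφ‖_X + ‖(F(s/m)φ − φ)/(s/m) − Lφ‖_X + ‖( (1/m)(F(s/m)^{m−1} + F(s/m)^{m−2} + ⋯ + F(s/m) + Id) − Id ) Lφ‖_X. -/

import Mathlib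

open MeasureTheory Filter Topology Matrix
open scoped ENNReal NNReal

noncomputable section

variable {X : Type*} [NormedAddCommGroup X] [NormedSpace ℝ X]

/-- `GenAt T φ y`: the strong right derivative at `t = 0` of `t ↦ T t φ` is `y`,
i.e. `φ` lies in the domain of the generator of `T`, with value `y`. -/
def GenAt (T : ℝ → X →L[ℝ] X) (φ y : X) : Prop :=
  Tendsto (fun t : ℝ => t⁻¹ • (T t φ - φ)) (𝓝[>] (0 : ℝ)) (𝓝 y)

/-- A strongly continuous semigroup (for `t ≥ 0`) of bounded linear operators. -/
structure IsC0Semigroup (T : ℝ → X →L[ℝ] X) : Prop where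
  map_zero : T 0 = 1
  map_add : ∀ s t : ℝ, 0 ≤ s → 0 ≤ t → T (s + t) = (T s).comp (T t)
  strong_continuity : ∀ φ : X, Tendsto (fun t : ℝ => T t φ) (𝓝[≥] (0 : ℝ)) (𝓝 φ)

/-- A strongly continuous contraction semigroup (for `t ≥ 0`). -/
structure IsContractionSemigroup (T : ℝ → X →L[ℝ] X) : Prop where
  map_zero : T 0 = 1
  map_add : ∀ s t : ℝ, 0 ≤ s → 0 ≤ t → T (s + t) = (T s).comp (T t)
  contraction : ∀ t : ℝ, 0 ≤ t → ‖T t‖ ≤ 1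
  strong_continuity : ∀ φ : X, Tendsto (fun t : ℝ => T t φ) (𝓝[≥] (0 : ℝ)) (𝓝 φ)

/-- `D` is a core for the generator of the semigroup `T`: every element of the graph of
the generator is approximated by elements of `D` together with their generator values. -/
def IsCore (T : ℝ → X →L[ℝ] X) (D : Set X) : Prop :=
  (∀ φ ∈ D, ∃ y, GenAt T φ y) ∧
  (∀ φ y, GenAt T φ y → ∃ u v : ℕ → X, (∀ n, u n ∈ D) ∧ (∀ n, GenAt T (u n) (v n)) ∧
      Tendsto u atTop (𝓝 φ) ∧ Tendsto v atTop (𝓝 y))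

/-- `(L, domL)` is the generator of the semigroup `T`. -/
def IsGenerator (T : ℝ → X →L[ℝ] X) (L : X → X) (domL : Set X) : Prop :=
  (∀ φ : X, φ ∈ domL ↔ ∃ y, GenAt T φ y) ∧ (∀ φ ∈ domL, GenAt T φ (L φ))

/-- `(F t)` is a family of contractions with `F 0 = Id`, strongly continuous in `t`,
Chernoff equivalent to the semigroup `T` whose generator restricted to the core `D` is `L`. -/
def ChernoffEquivOn (F T : ℝ → X →L[ℝ] X) (L : X → X) (D : Set X) : Prop :=
  F 0 = 1 ∧ (∀ t : ℝ, 0 ≤ t → ‖F t‖ ≤ 1) ∧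
  (∀ φ : X, ContinuousOn (fun t : ℝ => F t φ) (Set.Ici (0 : ℝ))) ∧
  IsCore T D ∧ (∀ φ ∈ D, GenAt T φ (L φ)) ∧
  (∀ φ ∈ D, Tendsto (fun t : ℝ => t⁻¹ • (F t φ - φ)) (𝓝[>] (0 : ℝ)) (𝓝 (L φ)))

/-- `(F t)` is Chernoff equivalent to the semigroup `T` (for some core of the generator). -/
def ChernoffEquiv (F T : ℝ → X →L[ℝ] X) : Prop :=
  F 0 = 1 ∧ (∀ φ : X, ContinuousOn (fun t : ℝ => F t φ) (Set.Ici (0 : ℝ))) ∧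
  (∃ a : ℝ, 0 ≤ a ∧ ∀ t : ℝ, 0 ≤ t → ‖F t‖ ≤ Real.exp (a * t)) ∧
  (∃ D : Set X, IsCore T D ∧ ∀ φ ∈ D, ∃ y, GenAt T φ y ∧
      Tendsto (fun t : ℝ => t⁻¹ • (F t φ - φ)) (𝓝[>] (0 : ℝ)) (𝓝 y))

/-- `T t φ = lim_n [F (t/n)]ⁿ φ`, locally uniformly with respect to `t ≥ 0`. -/
def ChernoffLimit (F T : ℝ → X →L[ℝ] X) : Prop :=
  ∀ φ : X, ∀ t₀ : ℝ, 0 < t₀ →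
    TendstoUniformlyOn (fun (n : ℕ) (t : ℝ) => (F (t / (n : ℝ)) ^ n) φ)
      (fun t : ℝ => T t φ) atTop (Set.Icc (0 : ℝ) t₀)

/-- A convolution semigroup of sub-probability Borel measures on `ℝ` supported by `[0,∞)`:
`η_0 = δ_0`, `η_{s+t} = η_s * η_t`, and `η_t → δ_0` weakly as `t → 0`. -/
structure IsConvSemigroup (η : ℝ → Measure ℝ) : Prop where
  mass_le_one : ∀ t : ℝ, 0 ≤ t → η t Set.univ ≤ 1
  support_nonneg : ∀ t : ℝ, 0 ≤ t → η t (Set.Iio (0 : ℝ)) = 0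
  map_zero : η 0 = Measure.dirac 0
  conv : ∀ s t : ℝ, 0 ≤ s → 0 ≤ t → ∀ g : BoundedContinuousFunction ℝ ℝ,
      ∫ x, g x ∂(η (s + t)) = ∫ x, (∫ y, g (x + y) ∂(η t)) ∂(η s)
  weak_cont_zero : ∀ g : BoundedContinuousFunction ℝ ℝ,
      Tendsto (fun t : ℝ => ∫ x, g x ∂(η t)) (𝓝[>] (0 : ℝ)) (𝓝 (g 0))

/-- `η` is associated with the Bernstein function with triplet `(σ, lam, μ)`,
via Laplace transforms: `∫ e^{-sx} η_t(ds) = e^{-t f(x)}` with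
`f(x) = σ + lam·x + ∫ (1 - e^{-sx}) μ(ds)`. -/
def AssociatedBernstein (η : ℝ → Measure ℝ) (σ lam : ℝ) (μ : Measure ℝ) : Prop :=
  ∀ x : ℝ, 0 < x → ∀ t : ℝ, 0 < t →
    ∫ s, Real.exp (-(s * x)) ∂(η t)
      = Real.exp (-(t * (σ + lam * x + ∫ s, (1 - Real.exp (-(s * x))) ∂μ)))

/-- Generator hypothesis on the convolution semigroup `η⁰`: for every `χ ∈ C²_b(ℝ)` with
`χ(0) = 0` one has `lim_{t↓0} t⁻¹ ∫ χ dη⁰_t = ∫ χ dμ`. -/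
def GeneratorHypothesis (η0 : ℝ → Measure ℝ) (μ : Measure ℝ) : Prop :=
  ∀ χ : ℝ → ℝ, ContDiff ℝ 2 χ →
    (∃ M : ℝ, ∀ x : ℝ, |χ x| + |deriv χ x| + |deriv (deriv χ) x| ≤ M) →
    χ 0 = 0 →
    Tendsto (fun t : ℝ => t⁻¹ * ∫ s, χ s ∂(η0 t)) (𝓝[>] (0 : ℝ)) (𝓝 (∫ s, χ s ∂μ))

/-- A (Radon) measure `μ` on `(0,∞)` with `∫ s/(1+s) μ(ds) < ∞`. -/
def IsLevyMeasure (μ : Measure ℝ) : Prop :=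
  μ (Set.Iic (0 : ℝ)) = 0 ∧ Integrable (fun s : ℝ => s / (1 + s)) μ

end

/-- (Lemma 3) The estimate for `Ψ_t(s)/s`. -/
theorem Psi_estimate
    {X : Type*} [NormedAddCommGroup X] [NormedSpace ℝ X]
    (T : ℝ → X →L[ℝ] X) (hT : IsContractionSemigroup T)
    (F : ℝ → X →L[ℝ] X) (hF : ∀ τ : ℝ, 0 ≤ τ → ‖F τ‖ ≤ 1)
    (φ Lφ : X) (hφ : GenAt T φ Lφ)
    (m : ℕ) (hm : 1 ≤ m) (s : ℝ) (hs : 0 < s) :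
    ‖(F (s / (m : ℝ)) ^ m) φ - T s φ‖ / s ≤
      ‖s⁻¹ • (T s φ - φ) - Lφ‖ +
      ‖(s / (m : ℝ))⁻¹ • (F (s / (m : ℝ)) φ - φ) - Lφ‖ +
      ‖(m : ℝ)⁻¹ • (∑ k ∈ Finset.range m, (F (s / (m : ℝ)) ^ k) Lφ) - Lφ‖ := by
  have hm' : (0:ℝ) < m := by exact_mod_cast Nat.lt_of_lt_of_le Nat.zero_lt_one hm
  set τ := s / (m : ℝ) with hτdef
  have hτ : 0 < τ := div_pos hs hm'
  set B := F τ with hBdef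
  have hBk : ∀ k : ℕ, ‖B ^ k‖ ≤ 1 := by
    intro k
    induction k with
    | zero => rw [pow_zero]; exact ContinuousLinearMap.norm_id_le
    | succ n ih =>
        calc ‖B ^ (n+1)‖ = ‖B ^ n * B‖ := by rw [pow_succ]
        _ ≤ ‖B ^ n‖ * ‖B‖ := norm_mul_le _ _
        _ ≤ 1 * 1 := mul_le_mul ih (hF τ hτ.le) (norm_nonneg _) zero_le_one
        _ = 1 := one_mul 1
  have tel : ∑ k ∈ Finset.range m, (B ^ k) (B φ - φ) = (B ^ m) φ - φ := by
    have h := Finset.sum_range_sub (fun k => (B ^ k) φ) m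
    simpa [pow_succ, ContinuousLinearMap.mul_apply, map_sub] using h
  have split : ∑ k ∈ Finset.range m, (B ^ k) (B φ - φ - τ • Lφ)
      = ((B ^ m) φ - φ) - τ • ∑ k ∈ Finset.range m, (B ^ k) Lφ := by
    rw [← tel]
    simp only [map_sub, _root_.map_smul, Finset.sum_sub_distrib, Finset.smul_sum]
  have keyid : (B ^ m) φ - T s φ
      = (∑ k ∈ Finset.range m, (B ^ k) (B φ - φ - τ • Lφ))
        + (τ • (∑ k ∈ Finset.range m, (B ^ k) Lφ) - s • Lφ)
        - (T s φ - φ - s • Lφ) := by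
    rw [split]; abel
  set a := ‖s⁻¹ • (T s φ - φ) - Lφ‖ with ha
  set b := ‖τ⁻¹ • (B φ - φ) - Lφ‖ with hb
  set c := ‖(m : ℝ)⁻¹ • (∑ k ∈ Finset.range m, (B ^ k) Lφ) - Lφ‖ with hc
  have hE1 : ‖T s φ - φ - s • Lφ‖ = s * a := by
    have : T s φ - φ - s • Lφ = s • (s⁻¹ • (T s φ - φ) - Lφ) := by
      rw [smul_sub, smul_inv_smul₀ hs.ne']
    rw [this, norm_smul, Real.norm_of_nonneg hs.le]
  have hE2 : ‖B φ - φ - τ • Lφ‖ = τ * b := by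
    have : B φ - φ - τ • Lφ = τ • (τ⁻¹ • (B φ - φ) - Lφ) := by
      rw [smul_sub, smul_inv_smul₀ hτ.ne']
    rw [this, norm_smul, Real.norm_of_nonneg hτ.le]
  have hE3 : ‖τ • (∑ k ∈ Finset.range m, (B ^ k) Lφ) - s • Lφ‖ = s * c := by
    have : τ • (∑ k ∈ Finset.range m, (B ^ k) Lφ) - s • Lφ
        = s • ((m : ℝ)⁻¹ • (∑ k ∈ Finset.range m, (B ^ k) Lφ) - Lφ) := by
      rw [smul_sub, smul_smul, ← div_eq_mul_inv]
    rw [this, norm_smul, Real.norm_of_nonneg hs.le]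
  have hsum : ‖∑ k ∈ Finset.range m, (B ^ k) (B φ - φ - τ • Lφ)‖ ≤ s * b := by
    calc ‖∑ k ∈ Finset.range m, (B ^ k) (B φ - φ - τ • Lφ)‖
        ≤ ∑ k ∈ Finset.range m, ‖(B ^ k) (B φ - φ - τ • Lφ)‖ := norm_sum_le _ _
      _ ≤ ∑ k ∈ Finset.range m, (τ * b) := by
          refine Finset.sum_le_sum fun k _ => ?_
          calc ‖(B ^ k) (B φ - φ - τ • Lφ)‖
              ≤ ‖B ^ k‖ * ‖B φ - φ - τ • Lφ‖ := (B ^ k).le_opNorm _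
            _ ≤ 1 * ‖B φ - φ - τ • Lφ‖ := by
                exact mul_le_mul_of_nonneg_right (hBk k) (norm_nonneg _)
            _ = τ * b := by rw [one_mul, hE2]
      _ = (m : ℝ) * (τ * b) := by rw [Finset.sum_const, Finset.card_range, nsmul_eq_mul]
      _ = s * b := by
          rw [← mul_assoc, hτdef, mul_div_cancel₀ _ hm'.ne']
  have hnorm : ‖(B ^ m) φ - T s φ‖ ≤ s * b + s * c + s * a := by
    rw [keyid]
    calc ‖(∑ k ∈ Finset.range m, (B ^ k) (B φ - φ - τ • Lφ))
          + (τ • (∑ k ∈ Finset.range m, (B ^ k) Lφ) - s • Lφ)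
          - (T s φ - φ - s • Lφ)‖
        ≤ ‖(∑ k ∈ Finset.range m, (B ^ k) (B φ - φ - τ • Lφ))
            + (τ • (∑ k ∈ Finset.range m, (B ^ k) Lφ) - s • Lφ)‖
          + ‖T s φ - φ - s • Lφ‖ := norm_sub_le _ _
      _ ≤ ‖∑ k ∈ Finset.range m, (B ^ k) (B φ - φ - τ • Lφ)‖
          + ‖τ • (∑ k ∈ Finset.range m, (B ^ k) Lφ) - s • Lφ‖
          + ‖T s φ - φ - s • Lφ‖ := by
            exact add_le_add_left (norm_add_le _ _) _
      _ ≤ s * b + s * c + s * a := by rw [hE3, hE1]; linarith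
  rw [div_le_iff₀ hs]
  nlinarith [hnorm]
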